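/- Let q be an odd prime power, n ≥ 1, and let g be an n×n matrix over 𝔽_q which is orthogonal (g·gᵀ = I) and has det(g) = 1. Then dim_{𝔽_q} ker(g − I) ≡ n (mod 2) and dim_{𝔽_q} ker(g + I) ≡ 0 (mod 2). -/

import Mathlib

open Matrix Module

namespace McKayGraphs

variable {F : Type} [Field F] {n : ℕ}




private lemma dot_mulVec_eq (A : Matrix (Fin n) (Fin n) F) (x y : Fin n → F) :
    x ⬝ᵥ (A *ᵥ y) = (Aᵀ *ᵥ x) ⬝ᵥ y := by
  rw [dotProduct_mulVec, Matrix.mulVec_transpose]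

private lemma rank_nullity (M : Matrix (Fin n) (Fin n) F) :
    M.rank + finrank F (LinearMap.ker M.mulVecLin) = n := by
  have h := LinearMap.finrank_range_add_finrank_ker M.mulVecLin
  rw [Module.finrank_fin_fun] at h
  exact h

private lemma rank_add_le (A B : Matrix (Fin n) (Fin n) F) :
    (A + B).rank ≤ A.rank + B.rank := by
  have hr : LinearMap.range (A + B).mulVecLin ≤
      LinearMap.range A.mulVecLin ⊔ LinearMap.range B.mulVecLin := by
    rintro _ ⟨x, rfl⟩
    rw [Matrix.mulVecLin_add]
    exact Submodule.add_mem_sup (LinearMap.mem_range_self _ x) (LinearMap.mem_range_self _ x)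
  have h1 : (A + B).rank ≤ finrank F
      (LinearMap.range A.mulVecLin ⊔ LinearMap.range B.mulVecLin : Submodule F (Fin n → F)) :=
    Submodule.finrank_mono hr
  have h2 := Submodule.finrank_sup_add_finrank_inf_eq
    (LinearMap.range A.mulVecLin) (LinearMap.range B.mulVecLin)
  unfold Matrix.rank at h1 ⊢
  omega

private lemma rank_smul_eq {c : F} (hc : c ≠ 0) (M : Matrix (Fin n) (Fin n) F) :
    (c • M).rank = M.rank := by
  have h : c • M = (c • (1 : Matrix (Fin n) (Fin n) F)) * M := by
    rw [Matrix.smul_mul, Matrix.one_mul]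
  rw [h, Matrix.rank_mul_eq_right_of_isUnit_det]
  rw [Matrix.det_smul, Matrix.det_one, mul_one]
  exact (pow_ne_zero _ hc).isUnit

private lemma rank_neg_eq (M : Matrix (Fin n) (Fin n) F) : (-M).rank = M.rank := by
  have : -M = (-1 : F) • M := by simp
  rw [this, rank_smul_eq (by norm_num)]





private lemma dotProduct_sum' {ι : Type*} (x : Fin n → F) (s : Finset ι) (f : ι → Fin n → F) :
    x ⬝ᵥ (∑ j ∈ s, f j) = ∑ j ∈ s, x ⬝ᵥ f j := by
  classical
  induction s using Finset.induction_on with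
  | empty => simp
  | insert _ _ h ih => rw [Finset.sum_insert h, Finset.sum_insert h, dotProduct_add, ih]

private lemma sum_dotProduct' {ι : Type*} (x : Fin n → F) (s : Finset ι) (f : ι → Fin n → F) :
    (∑ j ∈ s, f j) ⬝ᵥ x = ∑ j ∈ s, f j ⬝ᵥ x := by
  classical
  induction s using Finset.induction_on with
  | empty => simp
  | insert _ _ h ih => rw [Finset.sum_insert h, Finset.sum_insert h, add_dotProduct, ih]


private lemma skew_rank_even (h2 : (2:F) ≠ 0) (M : Matrix (Fin n) (Fin n) F)
    (hM : Mᵀ = -M) : M.rank % 2 = 0 := by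
  classical
  have hpair : ∀ x y : Fin n → F, x ⬝ᵥ (M *ᵥ y) = -(y ⬝ᵥ (M *ᵥ x)) := by
    intro x y
    rw [dot_mulVec_eq, hM, Matrix.neg_mulVec, neg_dotProduct, dotProduct_comm]
  set K := LinearMap.ker M.mulVecLin with hK
  obtain ⟨W, hW⟩ := Submodule.exists_isCompl K
  set d := finrank F W with hd
  let b : Basis (Fin d) F W := Module.finBasis F W
  set G : Matrix (Fin d) (Fin d) F :=
    Matrix.of (fun i j => ((b i : Fin n → F) ⬝ᵥ (M *ᵥ (b j : Fin n → F)))) with hG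
  have hGapp : ∀ i j, G i j = (b i : Fin n → F) ⬝ᵥ (M *ᵥ (b j : Fin n → F)) := fun i j => rfl
  -- kernel of G is trivial
  have hker : ∀ c : Fin d → F, G *ᵥ c = 0 → c = 0 := by
    intro c hc
    set w : W := ∑ j, c j • b j with hw
    have hwco : (w : Fin n → F) = ∑ j, c j • (b j : Fin n → F) := by
      simp [hw]
    have hMw : M *ᵥ (w : Fin n → F) = ∑ j, c j • (M *ᵥ (b j : Fin n → F)) := by
      rw [hwco, ← Matrix.mulVecLin_apply, map_sum]
      simp [Matrix.mulVecLin_apply]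
    have hmain : ∀ i, (b i : Fin n → F) ⬝ᵥ (M *ᵥ (w : Fin n → F)) = 0 := by
      intro i
      have := congrFun hc i
      rw [Matrix.mulVec, Pi.zero_apply] at this
      rw [hMw]
      rw [dotProduct_sum']
      have h2' : ∑ x : Fin d, ∑ i_1 : Fin n, c x * ((b i : Fin n → F) i_1 * (M *ᵥ (b x : Fin n → F)) i_1) = 0 := by
        simpa [hGapp, dotProduct, mul_comm, Finset.mul_sum] using this
      rw [← h2']
      apply Finset.sum_congr rfl
      intro j _
      simp [dotProduct, Finset.mul_sum]
      apply Finset.sum_congr rfl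
      intro k _
      ring
    have hallW : ∀ z ∈ W, z ⬝ᵥ (M *ᵥ (w : Fin n → F)) = 0 := by
      intro z hz
      have hrep : (⟨z, hz⟩ : W) = ∑ j, b.repr ⟨z, hz⟩ j • b j := (b.sum_repr _).symm
      have hzco : z = ∑ j, b.repr ⟨z, hz⟩ j • (b j : Fin n → F) := by
        have := congrArg (Subtype.val) hrep
        simp only [Submodule.coe_sum, Submodule.coe_smul] at this
        exact this
      rw [hzco, sum_dotProduct']
      refine Finset.sum_eq_zero fun j _ => ?_
      rw [smul_dotProduct, hmain, smul_zero]
    have hall : ∀ x : Fin n → F, x ⬝ᵥ (M *ᵥ (w : Fin n → F)) = 0 := by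
      intro x
      have hx : x ∈ K ⊔ W := by rw [hW.sup_eq_top]; trivial
      obtain ⟨y, hy, z, hz, rfl⟩ := Submodule.mem_sup.mp hx
      rw [add_dotProduct, hallW z hz, add_zero]
      rw [hpair]
      have : M *ᵥ y = 0 := hy
      rw [this, dotProduct_zero, neg_zero]
    have hMw0 : M *ᵥ (w : Fin n → F) = 0 := by
      funext i
      have := hall (Pi.single i 1)
      rw [single_dotProduct, one_mul] at this
      simpa using this
    have hwK : (w : Fin n → F) ∈ K := hMw0
    have : w = 0 := by
      have := hW.disjoint
      have h0 : (w : Fin n → F) ∈ K ⊓ W := ⟨hwK, w.2⟩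
      rw [hW.inf_eq_bot] at h0
      exact Subtype.ext (by simpa using h0)
    have hlin := b.linearIndependent
    rw [Fintype.linearIndependent_iff] at hlin
    funext j
    exact hlin c (by rw [← hw, this]) j
  have hdet : G.det ≠ 0 := by
    intro h0
    obtain ⟨c, hc0, hc⟩ := Matrix.exists_mulVec_eq_zero_iff.mpr h0
    exact hc0 (hker c hc)
  -- G is skew
  have hGskew : Gᵀ = -G := by
    ext i j
    rw [Matrix.transpose_apply, Matrix.neg_apply, hGapp, hGapp, hpair]
  -- d is even
  have hd2 : d % 2 = 0 := by
    have h1 : G.det = (-1 : F) ^ d * G.det := by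
      conv_lhs => rw [← Matrix.det_transpose, hGskew, Matrix.det_neg, Fintype.card_fin]
    rcases Nat.even_or_odd d with he | ho
    · exact Nat.even_iff.mp he
    · exfalso
      rw [ho.neg_one_pow] at h1
      have : (-1 : F) = 1 := by
        have := mul_right_cancel₀ hdet (by rw [← h1, one_mul] : (-1:F) * G.det = 1 * G.det)
        exact this
      have h22 : (2 : F) = 0 := by linear_combination -this
      exact h2 h22
  -- rank M = d
  have hrank : M.rank = d := by
    have e1 : M.rank + finrank F K = n := by
      have h := LinearMap.finrank_range_add_finrank_ker M.mulVecLin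
      rw [Module.finrank_fin_fun] at h
      exact h
    have e2 : finrank F K + finrank F W = n := by
      have := Submodule.finrank_add_eq_of_isCompl hW
      rwa [Module.finrank_fin_fun] at this
    omega
  rw [hrank]; exact hd2





private lemma vecMulVec_mulVec (u v y : Fin n → F) :
    (vecMulVec u v) *ᵥ y = (v ⬝ᵥ y) • u := by
  funext i
  simp [Matrix.vecMulVec, Matrix.mulVec, dotProduct, Finset.mul_sum, mul_comm, mul_assoc]
  exact Finset.sum_congr rfl fun k _ => by ring

private lemma vecMulVec_mul_vecMulVec (u v u' v' : Fin n → F) :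
    vecMulVec u v * vecMulVec u' v' = (v ⬝ᵥ u') • vecMulVec u v' := by
  ext i j
  simp [Matrix.vecMulVec, Matrix.mul_apply, dotProduct, Finset.sum_mul, Finset.mul_sum]
  apply Finset.sum_congr rfl
  intro k _
  ring

private lemma vecMulVec_transpose (u v : Fin n → F) :
    (vecMulVec u v)ᵀ = vecMulVec v u := by
  ext i j
  simp [Matrix.vecMulVec, mul_comm]

section refl
variable (v : Fin n → F)

private noncomputable def rfl' (v : Fin n → F) : Matrix (Fin n) (Fin n) F :=
  1 - (2 / (v ⬝ᵥ v)) • vecMulVec v v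

variable (hv : v ⬝ᵥ v ≠ 0)
include hv

private lemma rfl'_mulVec (y : Fin n → F) :
    (rfl' v) *ᵥ y = y - ((2 / (v ⬝ᵥ v)) * (v ⬝ᵥ y)) • v := by
  rw [rfl', Matrix.sub_mulVec, Matrix.one_mulVec, Matrix.smul_mulVec,
    vecMulVec_mulVec, smul_smul]

private lemma rfl'_mul_rfl' : rfl' v * rfl' v = 1 := by
  have expand_sq : ∀ B : Matrix (Fin n) (Fin n) F, (1 - B) * (1 - B) = 1 - B - B + B * B := by
    intro B; noncomm_ring
  rw [rfl', expand_sq, smul_mul_smul_comm, vecMulVec_mul_vecMulVec, smul_smul]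
  have hcq : 2 / (v ⬝ᵥ v) * (2 / (v ⬝ᵥ v)) * (v ⬝ᵥ v) = 2 / (v ⬝ᵥ v) + 2 / (v ⬝ᵥ v) := by
    field_simp
    ring
  rw [hcq, add_smul]
  abel

private lemma rfl'_transpose : (rfl' v)ᵀ = rfl' v := by
  rw [rfl', Matrix.transpose_sub, Matrix.transpose_one, Matrix.transpose_smul,
    vecMulVec_transpose]

private lemma rfl'_det : (rfl' v).det = -1 := by
  have h : rfl' v = 1 + Matrix.replicateCol (Fin 1) ((-(2 / (v ⬝ᵥ v))) • v) * Matrix.replicateRow (Fin 1) v := by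
    rw [rfl', Matrix.vecMulVec_eq (Fin 1), sub_eq_add_neg, ← neg_smul, Matrix.replicateCol_smul,
      Matrix.smul_mul]
    rfl
  rw [h]
  erw [Matrix.det_one_add_replicateCol_mul_replicateRow]
  rw [dotProduct_smul, smul_eq_mul]
  field_simp
  ring

end refl





private lemma det_orth [Fintype F] (hch : ringChar F ≠ 2) (ρ : ℕ) :
    ∀ g : Matrix (Fin n) (Fin n) F, g * gᵀ = 1 → (g - 1).rank = ρ → g.det = (-1) ^ ρ := by
  induction ρ using Nat.strong_induction_on with
  | _ ρ IH =>
  intro g horth hrank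
  have h2 : (2 : F) ≠ 0 := Ring.two_ne_zero hch
  have hgtg : gᵀ * g = 1 := mul_eq_one_comm.mp horth
  set M : Matrix (Fin n) (Fin n) F := g - 1 with hM
  by_cases hQ : ∀ x : Fin n → F, (M *ᵥ x) ⬝ᵥ (M *ᵥ x) = 0
  · -- degenerate case
    have hdotmv : ∀ (A : Matrix (Fin n) (Fin n) F) (x y : Fin n → F),
        x ⬝ᵥ (A *ᵥ y) = (Aᵀ *ᵥ x) ⬝ᵥ y := fun A x y => by
      rw [dotProduct_mulVec, Matrix.mulVec_transpose]
    set S : Matrix (Fin n) (Fin n) F := Mᵀ * M with hS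
    have hSx : ∀ x : Fin n → F, x ⬝ᵥ (S *ᵥ x) = 0 := by
      intro x
      rw [hS, ← Matrix.mulVec_mulVec, hdotmv, Matrix.transpose_transpose]
      exact hQ x
    have hSsymm : ∀ x y : Fin n → F, y ⬝ᵥ (S *ᵥ x) = x ⬝ᵥ (S *ᵥ y) := by
      intro x y
      rw [hdotmv, hS, Matrix.transpose_mul, Matrix.transpose_transpose, ← hS,
        dotProduct_comm]
    have hpol : ∀ x y : Fin n → F, x ⬝ᵥ (S *ᵥ y) = 0 := by
      intro x y
      have h0 := hSx (x + y)
      rw [Matrix.mulVec_add, add_dotProduct, dotProduct_add,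
        dotProduct_add, hSx x, hSx y, hSsymm x y] at h0
      have h0' : (2 : F) * (x ⬝ᵥ (S *ᵥ y)) = 0 := by linear_combination h0
      rcases mul_eq_zero.mp h0' with h | h
      · exact absurd h h2
      · exact h
    have hS0 : S = 0 := by
      ext i j
      have := hpol (Pi.single i 1) (Pi.single j 1)
      rw [Matrix.mulVec_single, single_dotProduct] at this
      simpa using this
    have hexp : S = gᵀ * g - gᵀ - g + 1 := by
      rw [hS, hM, Matrix.transpose_sub, Matrix.transpose_one]
      noncomm_ring
    have h1m : (1 : Matrix (Fin n) (Fin n) F) - gᵀ - g + 1 = 0 := by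
      have h' : gᵀ * g - gᵀ - g + 1 = 0 := by rw [← hexp, hS0]
      rwa [hgtg] at h'
    have hsum : g + gᵀ = 1 + 1 := by
      have hcalc : g + gᵀ - (1 + 1) = -(1 - gᵀ - g + 1) := by abel
      have : g + gᵀ - (1 + 1) = 0 := by rw [hcalc, h1m, neg_zero]
      exact sub_eq_zero.mp this
    have hgT : gᵀ = 1 + 1 - g := by rw [← hsum]; abel
    have hTsk : (g - gᵀ)ᵀ = -(g - gᵀ) := by
      rw [Matrix.transpose_sub, Matrix.transpose_transpose, neg_sub]
    have hT : g - gᵀ = (2 : F) • M := by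
      rw [hgT, hM]
      ext i j
      simp only [Matrix.sub_apply, Matrix.add_apply, Matrix.smul_apply, smul_eq_mul]
      ring
    have hrank_even : ρ % 2 = 0 := by
      have he := skew_rank_even h2 (g - gᵀ) hTsk
      rw [hT, rank_smul_eq h2] at he
      rw [← hrank]
      exact he
    -- determinant is one
    have hNN : M * M + g * (1 + 1 - g) = 1 := by
      rw [hM]; noncomm_ring
    have hg1 : g * (1 + 1 - g) = 1 := by rw [← hgT]; exact horth
    have hN2 : M * M = 0 := by
      have := hNN
      rw [hg1] at this
      have h' : M * M + 1 = 0 + 1 := by rw [this, zero_add]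
      exact add_right_cancel h'
    have hgN : g = 1 + M := by rw [hM]; abel
    have hpow : ∀ k : ℕ, g ^ k = 1 + (k : F) • M := by
      intro k
      induction k with
      | zero => rw [pow_zero, Nat.cast_zero, zero_smul, add_zero]
      | succ k ih =>
        rw [pow_succ, ih]
        have hstep : (1 + (k : F) • M) * g = 1 + (k : F) • M + (1 + (k : F) • M) * M := by
          conv_lhs => rw [hgN]
          rw [Matrix.mul_add, Matrix.mul_one]
        rw [hstep, Matrix.add_mul, Matrix.one_mul, Matrix.smul_mul, hN2, smul_zero, add_zero,
          Nat.cast_add, Nat.cast_one, add_smul, one_smul]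
        abel
    set p := ringChar F with hp
    haveI : CharP F p := ringChar.charP F
    have hpprime : p.Prime := CharP.char_is_prime F p
    have hgp : g ^ p = 1 := by
      rw [hpow p, CharP.cast_eq_zero F p, zero_smul, add_zero]
    have hdet2 : g.det * g.det = 1 := by
      have := congrArg Matrix.det horth
      rwa [Matrix.det_mul, Matrix.det_transpose, Matrix.det_one] at this
    have hdet1 : g.det = 1 := by
      rcases mul_self_eq_one_iff.mp hdet2 with h | h
      · exact h
      · exfalso
        have hodd : Odd p := hpprime.odd_of_ne_two hch
        have : (g ^ p).det = 1 := by rw [hgp, Matrix.det_one]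
        rw [Matrix.det_pow, h, hodd.neg_one_pow] at this
        exact Ring.neg_one_ne_one_of_char_ne_two hch this
    rw [hdet1, (Nat.even_iff.mpr hrank_even).neg_one_pow]
  · -- reflection descent
    push_neg at hQ
    obtain ⟨x, hx⟩ := hQ
    set v : Fin n → F := M *ᵥ x with hv
    have hq : v ⬝ᵥ v ≠ 0 := hx
    set r : Matrix (Fin n) (Fin n) F := rfl' v with hr
    have hrr : r * r = 1 := rfl'_mul_rfl' v hq
    have hrT : rᵀ = r := rfl'_transpose v hq
    have hrdet : r.det = -1 := rfl'_det v hq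
    have hrmv : ∀ y, r *ᵥ y = y - ((2 / (v ⬝ᵥ v)) * (v ⬝ᵥ y)) • v :=
      fun y => rfl'_mulVec v hq y
    have horth' : (r * g) * (r * g)ᵀ = 1 := by
      rw [Matrix.transpose_mul, hrT, Matrix.mul_assoc, ← Matrix.mul_assoc g gᵀ r, horth,
        Matrix.one_mul, hrr]
    have hKsub : LinearMap.ker M.mulVecLin ≤ LinearMap.ker ((r * g - 1).mulVecLin) := by
      intro y hy
      have hy' : M *ᵥ y = 0 := hy
      have hgy : g *ᵥ y = y := by
        rw [hM, Matrix.sub_mulVec, Matrix.one_mulVec, sub_eq_zero] at hy'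
        exact hy'
      have hgty : gᵀ *ᵥ y = y := by
        conv_lhs => rw [← hgy]
        rw [Matrix.mulVec_mulVec, hgtg, Matrix.one_mulVec]
      have hvy : v ⬝ᵥ y = 0 := by
        rw [hv, dotProduct_comm, dot_mulVec_eq, hM, Matrix.transpose_sub,
          Matrix.transpose_one, Matrix.sub_mulVec, Matrix.one_mulVec, hgty, sub_self,
          zero_dotProduct]
      have hry : r *ᵥ y = y := by
        rw [hrmv, hvy, mul_zero, zero_smul, sub_zero]
      show (r * g - 1).mulVecLin y = 0
      rw [Matrix.mulVecLin_apply, Matrix.sub_mulVec, Matrix.one_mulVec, ← Matrix.mulVec_mulVec,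
        hgy, hry, sub_self]
    have hgx : g *ᵥ x = x + v := by
      have : M *ᵥ x = g *ᵥ x - x := by
        rw [hM, Matrix.sub_mulVec, Matrix.one_mulVec]
      rw [hv, this]
      abel
    have hxK' : (r * g - 1) *ᵥ x = 0 := by
      have hnorm : (g *ᵥ x) ⬝ᵥ (g *ᵥ x) = x ⬝ᵥ x := by
        rw [dot_mulVec_eq, Matrix.mulVec_mulVec, hgtg, Matrix.one_mulVec]
      have h2vx : v ⬝ᵥ x + v ⬝ᵥ x + v ⬝ᵥ v = 0 := by
        rw [hgx, add_dotProduct, dotProduct_add, dotProduct_add] at hnorm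
        have hc : x ⬝ᵥ v = v ⬝ᵥ x := dotProduct_comm x v
        linear_combination hnorm - hc
      have hcoef : 2 / (v ⬝ᵥ v) * (v ⬝ᵥ (x + v)) = 1 := by
        rw [dotProduct_add]
        field_simp
        linear_combination h2vx
      rw [Matrix.sub_mulVec, Matrix.one_mulVec, ← Matrix.mulVec_mulVec, hgx, hrmv, hcoef,
        one_smul]
      abel
    have hxnotK : x ∉ LinearMap.ker M.mulVecLin := by
      intro hmem
      have h0 : M *ᵥ x = 0 := hmem
      apply hq
      rw [hv, h0, zero_dotProduct]
    have hxmem : x ∈ LinearMap.ker ((r * g - 1).mulVecLin) :=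
      LinearMap.mem_ker.mpr (by rw [Matrix.mulVecLin_apply]; exact hxK')
    have hlt : LinearMap.ker M.mulVecLin < LinearMap.ker ((r * g - 1).mulVecLin) :=
      lt_of_le_of_ne hKsub (fun he => hxnotK (he ▸ hxmem))
    have hfin : finrank F (LinearMap.ker M.mulVecLin) <
        finrank F (LinearMap.ker ((r * g - 1).mulVecLin)) :=
      Submodule.finrank_lt_finrank_of_lt hlt
    have hdecomp : M = r * (r * g - 1) + (r - 1) := by
      rw [Matrix.mul_sub, ← Matrix.mul_assoc, hrr, Matrix.one_mul, Matrix.mul_one, hM]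
      abel
    have hA1 : (vecMulVec v v).rank ≤ 1 := by
      rw [Matrix.vecMulVec_eq (Fin 1)]
      refine le_trans (Matrix.rank_mul_le_left _ _) ?_
      exact (Matrix.rank_le_card_width (Matrix.replicateCol (Fin 1) v)).trans (by simp)
    have hr1 : r - 1 = -((2 / (v ⬝ᵥ v)) • vecMulVec v v) := by
      rw [hr, rfl', sub_sub_cancel_left]
    have hr1rank : (r - 1).rank ≤ 1 := by
      rw [hr1, rank_neg_eq]
      have hsm : (2 / (v ⬝ᵥ v)) • vecMulVec v v =
          ((2 / (v ⬝ᵥ v)) • (1 : Matrix (Fin n) (Fin n) F)) * vecMulVec v v := by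
        rw [Matrix.smul_mul, Matrix.one_mul]
      rw [hsm]
      exact le_trans (Matrix.rank_mul_le_right _ _) hA1
    have hrur : IsUnit r.det := by
      rw [hrdet]
      exact isUnit_one.neg
    have hrankdle : M.rank ≤ (r * g - 1).rank + 1 := by
      calc M.rank = (r * (r * g - 1) + (r - 1)).rank := by rw [← hdecomp]
        _ ≤ (r * (r * g - 1)).rank + (r - 1).rank := rank_add_le _ _
        _ = (r * g - 1).rank + (r - 1).rank := by rw [Matrix.rank_mul_eq_right_of_isUnit_det r _ hrur]
        _ ≤ (r * g - 1).rank + 1 := by omega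
    have e1 : M.rank + finrank F (LinearMap.ker M.mulVecLin) = n := rank_nullity M
    have e2 : (r * g - 1).rank + finrank F (LinearMap.ker ((r * g - 1).mulVecLin)) = n :=
      rank_nullity _
    have hrg : (r * g - 1).rank = ρ - 1 := by omega
    have hρ1 : 1 ≤ ρ := by omega
    have hdetrg : (r * g).det = (-1) ^ (ρ - 1) :=
      IH (ρ - 1) (by omega) (r * g) horth' hrg
    have hgeq : g = r * (r * g) := by rw [← Matrix.mul_assoc, hrr, Matrix.one_mul]
    have hcast : ρ - 1 + 1 = ρ := by omega
    calc g.det = (r * (r * g)).det := by rw [← hgeq]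
      _ = r.det * (r * g).det := Matrix.det_mul _ _
      _ = -1 * (-1) ^ (ρ - 1) := by rw [hrdet, hdetrg]
      _ = (-1) ^ (ρ - 1 + 1) := by ring
      _ = (-1) ^ ρ := by rw [hcast]


/-- **Equation (22) of Liebeck–Shalev–Tiep.** Let `q` be odd and `g ∈ SO_n(q)`, i.e.
`g·gᵀ = 1` and `det g = 1` over `𝔽_q`. Then `dim ker(g − 1) ≡ n (mod 2)` and
`dim ker(g + 1) ≡ 0 (mod 2)`. -/
theorem finrank_ker_parity_of_specialOrthogonal (F : Type) [Field F] [Fintype F]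
    (hq : Odd (Fintype.card F)) (n : ℕ) (hn : 1 ≤ n)
    (g : Matrix (Fin n) (Fin n) F) (horth : g * gᵀ = 1) (hdet : g.det = 1) :
    Module.finrank F (LinearMap.ker (Matrix.mulVecLin (g - 1))) % 2 = n % 2 ∧
    Module.finrank F (LinearMap.ker (Matrix.mulVecLin (g + 1))) % 2 = 0 := by
  have hch : ringChar F ≠ 2 := by
    intro h
    have h0 := FiniteField.even_card_iff_char_two.mp h
    rw [Nat.odd_iff] at hq
    omega
  have hne : (-1 : F) ≠ 1 := Ring.neg_one_ne_one_of_char_ne_two hch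
  have pow_parity : ∀ a b : ℕ, ((-1 : F)) ^ a = (-1) ^ b → a % 2 = b % 2 := by
    intro a b h
    rcases Nat.even_or_odd a with ha | ha <;> rcases Nat.even_or_odd b with hb | hb
    · rw [Nat.even_iff.mp ha, Nat.even_iff.mp hb]
    · exfalso; rw [ha.neg_one_pow, hb.neg_one_pow] at h; exact hne h.symm
    · exfalso; rw [ha.neg_one_pow, hb.neg_one_pow] at h; exact hne h
    · rw [Nat.odd_iff.mp ha, Nat.odd_iff.mp hb]
  constructor
  · have hd := det_orth hch ((g - 1).rank) g horth rfl
    rw [hdet] at hd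
    have h0 : (g - 1).rank % 2 = 0 % 2 := pow_parity _ 0 (by rw [← hd, pow_zero])
    have e1 := rank_nullity (g - 1)
    omega
  · have horth2 : (-g) * (-g)ᵀ = 1 := by
      rw [Matrix.transpose_neg, neg_mul_neg, horth]
    have hd := det_orth hch ((-g - 1).rank) (-g) horth2 rfl
    have hdneg : (-g).det = (-1 : F) ^ n := by
      rw [Matrix.det_neg, hdet, mul_one, Fintype.card_fin]
    have hrankeq : (-g - 1).rank = (g + 1).rank := by
      have hms : -g - 1 = -(g + 1) := by abel
      rw [hms, rank_neg_eq]
    rw [hdneg, hrankeq] at hd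
    have hmod : n % 2 = (g + 1).rank % 2 := pow_parity n _ hd
    have e1 := rank_nullity (g + 1)
    omega

end McKayGraphs
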